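/- Let β ∈ (−π/2, 0), α ∈ (0, π/2 − β) and −sin(β) < a < −1/sin(β), and define b:[0,1]→ℝ by b(z) = sin(αz + β) + a. Then b maps into (0,∞), is twice continuously differentiable with b(0) ≠ b(1), b'(z) = α cos(αz + β) > 0 for all z ∈ [0,1], and b''(z)b(z) − b'(z)² < 0 for all z ∈ [0,1] (so the sine logarithmic linked exposure example defines a well-defined distribution). Moreover, if the density f_Z(z) = ((sin(β)+a)/cos(β)) · α(1 + a sin(αz + β)) / (sin(αz + β) + a)² has a critical point, i.e. f_Z'(z) = 0 for some z ∈ (0,1), then 1 ≤ a ≤ 2; hence the density can only be unimodal on [0,1) if 1 ≤ a ≤ 2. -/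

import Mathlib

/-- For `β ∈ (-π/2, 0)`, `α ∈ (0, π/2 - β)` and
`-sin β < a < -1/sin β`, the inner function `b z = sin(αz + β) + a` maps into `(0,∞)`,
is twice continuously differentiable with `b 0 ≠ b 1`,
`b' z = α cos(αz + β) > 0` and `b'' z b z - (b' z)² < 0` on `[0,1]` (so the sine
logarithmic linked exposure example defines a well-defined distribution). Moreover, if
the density `f_Z z = ((sin β + a)/cos β) α(1 + a sin(αz + β))/(sin(αz + β) + a)²` has a
critical point in `(0,1)`, then `1 ≤ a ≤ 2`; hence the density can only be unimodal on
`[0,1)` if `1 ≤ a ≤ 2`. -/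
theorem statement16 (α β a : ℝ)
    (hβ : β ∈ Set.Ioo (-(Real.pi / 2)) 0)
    (hα : α ∈ Set.Ioo 0 (Real.pi / 2 - β))
    (ha1 : -Real.sin β < a) (ha2 : a < -(1 / Real.sin β)) :
    let b : ℝ → ℝ := fun z => Real.sin (α * z + β) + a
    let b' : ℝ → ℝ := fun z => α * Real.cos (α * z + β)
    let b'' : ℝ → ℝ := fun z => -(α ^ 2) * Real.sin (α * z + β)
    let f : ℝ → ℝ := fun z =>
      (Real.sin β + a) / Real.cos β *
        (α * (1 + a * Real.sin (α * z + β)) / (Real.sin (α * z + β) + a) ^ 2)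
    (∀ z ∈ Set.Icc (0:ℝ) 1, 0 < b z) ∧
    b 0 ≠ b 1 ∧
    (∀ z : ℝ, HasDerivAt b (b' z) z) ∧
    (∀ z : ℝ, HasDerivAt b' (b'' z) z) ∧
    (∀ z ∈ Set.Icc (0:ℝ) 1, 0 < b' z) ∧
    (∀ z ∈ Set.Icc (0:ℝ) 1, b'' z * b z - (b' z) ^ 2 < 0) ∧
    ((∃ z ∈ Set.Ioo (0:ℝ) 1, HasDerivAt f 0 z) → 1 ≤ a ∧ a ≤ 2) := by
  obtain ⟨hβ1, hβ2⟩ := hβ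
  obtain ⟨hα1, hα2⟩ := hα
  have hπ := Real.pi_pos
  have hsβ : Real.sin β < 0 := Real.sin_neg_of_neg_of_neg_pi_lt hβ2 (by linarith)
  have ha0 : 0 < a := by linarith
  have hK : 0 < Real.sin β + a := by linarith
  have hcβ : 0 < Real.cos β := Real.cos_pos_of_mem_Ioo ⟨hβ1, by linarith⟩
  have hasβ : -1 < a * Real.sin β := by
    have h := mul_lt_mul_of_neg_right ha2 hsβ
    have h1 : -(1 / Real.sin β) * Real.sin β = -1 := by
      rw [neg_mul, one_div, inv_mul_cancel₀ hsβ.ne]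
    linarith
  have hmemβ : β ∈ Set.Icc (-(Real.pi/2)) (Real.pi/2) := ⟨le_of_lt hβ1, by linarith⟩
  have hmem : ∀ z ∈ Set.Icc (0:ℝ) 1,
      α * z + β ∈ Set.Icc (-(Real.pi/2)) (Real.pi/2) := by
    intro z hz
    constructor
    · nlinarith [hz.1]
    · nlinarith [hz.2]
  have hsge : ∀ z ∈ Set.Icc (0:ℝ) 1, Real.sin β ≤ Real.sin (α * z + β) := by
    intro z hz
    exact Real.strictMonoOn_sin.monotoneOn hmemβ (hmem z hz) (by nlinarith [hz.1])
  have hulin : ∀ z : ℝ, HasDerivAt (fun z : ℝ => α * z + β) α z := by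
    intro z
    simpa using ((hasDerivAt_id z).const_mul α).add_const β
  have hsin : ∀ z : ℝ, HasDerivAt (fun z => Real.sin (α * z + β))
      (Real.cos (α * z + β) * α) z := fun z => by
    have := (Real.hasDerivAt_sin (α * z + β)).comp z (hulin z); exact this
  intro b b' b'' f
  refine ⟨?_, ?_, ?_, ?_, ?_, ?_, ?_⟩
  · intro z hz
    have := hsge z hz
    simp only [b]
    linarith
  · have hlt : Real.sin β < Real.sin (α + β) :=
      Real.strictMonoOn_sin hmemβ ⟨by linarith, by linarith⟩ (by linarith)
    simp only [b, mul_zero, zero_add, mul_one]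
    exact ne_of_lt (by linarith)
  · intro z
    simpa [b, b', mul_comm] using (hsin z).add_const a
  · intro z
    have h := ((Real.hasDerivAt_cos (α * z + β)).comp z (hulin z)).const_mul α
    simp only [b', b'']
    exact h.congr_deriv (by ring)
  · intro z hz
    have hc : 0 < Real.cos (α * z + β) :=
      Real.cos_pos_of_mem_Ioo ⟨by nlinarith [hz.1], by nlinarith [hz.2]⟩
    exact mul_pos hα1 hc
  · intro z hz
    have hc := Real.sin_sq_add_cos_sq (α * z + β)
    have hs := hsge z hz
    have hpos : 0 < 1 + a * Real.sin (α * z + β) := by nlinarith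
    have hα2pos : 0 < α ^ 2 := by positivity
    simp only [b, b', b'']
    nlinarith [mul_pos hα2pos hpos]
  · rintro ⟨z, hz, hcrit⟩
    have hzIcc : z ∈ Set.Icc (0:ℝ) 1 := ⟨hz.1.le, hz.2.le⟩
    have hsu : Real.sin β ≤ Real.sin (α * z + β) := hsge z hzIcc
    have hbpos : 0 < Real.sin (α * z + β) + a := by linarith
    have hcpos : 0 < Real.cos (α * z + β) :=
      Real.cos_pos_of_mem_Ioo ⟨by nlinarith [hz.1.le], by nlinarith [hz.2.le]⟩
    have hN : HasDerivAt (fun z => α * (1 + a * Real.sin (α * z + β)))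
        (α * (a * (Real.cos (α * z + β) * α))) z :=
      (((hsin z).const_mul a).const_add 1).const_mul α
    have hD := ((hsin z).add_const a).pow 2
    have hf := (hN.div hD (by simp only [Pi.pow_apply]; positivity)).const_mul ((Real.sin β + a) / Real.cos β)
    simp only [f] at hcrit
    have h0 := hf.unique hcrit
    have hKne : (Real.sin β + a) / Real.cos β ≠ 0 := by positivity
    rcases mul_eq_zero.mp h0 with h | h
    · exact absurd h hKne
    · have hX := (div_eq_zero_iff.mp h).resolve_right (by simp only [Pi.pow_apply]; positivity)
      have hfac : α ^ 2 * Real.cos (α * z + β) * (Real.sin (α * z + β) + a) *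
          (a ^ 2 - 2 - a * Real.sin (α * z + β)) = 0 := by
        simp only [Pi.pow_apply] at hX
        linear_combination hX
      have hzero : a ^ 2 - 2 - a * Real.sin (α * z + β) = 0 := by
        rcases mul_eq_zero.mp hfac with h' | h'
        · exact absurd h' (by positivity)
        · exact h'
      have hs1 : Real.sin (α * z + β) ≤ 1 := Real.sin_le_one _
      have hs2 : -1 ≤ Real.sin (α * z + β) := Real.neg_one_le_sin _
      constructor
      · nlinarith
      · nlinarith
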